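/- Every two-dimensional Hilbert basis is supernormal. -/

import Mathlib

/-- `x ∈ ℝ^m` lies in the cone (nonnegative real span) of `B ⊆ ℤ^m`. -/
def ConeM {m : ℕ} (B : Set (Fin m → ℤ)) (x : Fin m → ℝ) : Prop :=
  ∃ (s : Finset (Fin m → ℤ)) (c : (Fin m → ℤ) → ℝ),
    ↑s ⊆ B ∧ (∀ b, 0 ≤ c b) ∧ ∀ i, x i = ∑ b ∈ s, c b * (b i : ℝ)

/-- `z ∈ ℤ^m` is a nonnegative integer combination of elements of `B ⊆ ℤ^m`. -/
def NNCombM {m : ℕ} (B : Set (Fin m → ℤ)) (z : Fin m → ℤ) : Prop :=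
  ∃ (s : Finset (Fin m → ℤ)) (c : (Fin m → ℤ) → ℕ),
    ↑s ⊆ B ∧ ∀ i, z i = ∑ b ∈ s, (c b : ℤ) * b i

/-- `B ⊆ ℤ^m` is supernormal if for every subset `B' ⊆ B` every lattice point of
`cone(B')` is a nonnegative integer combination of `B ∩ cone(B')`. -/
def SupernormalM {m : ℕ} (B : Set (Fin m → ℤ)) : Prop :=
  ∀ B' ⊆ B, ∀ z : Fin m → ℤ, ConeM B' (fun i => (z i : ℝ)) →
    NNCombM {b ∈ B | ConeM B' (fun i => (b i : ℝ))} z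

/-- `B ⊆ ℤ^m` is normal if every lattice point of `cone(B)` is a nonnegative
integer combination of `B`. -/
def NormalM {m : ℕ} (B : Set (Fin m → ℤ)) : Prop :=
  ∀ z : Fin m → ℤ, ConeM B (fun i => (z i : ℝ)) → NNCombM B z

namespace SN

abbrev V := Fin 2 → ℤ

/-- 2×2 determinant. -/
def Dt (x y : V) : ℤ := x 0 * y 1 - x 1 * y 0

lemma Dt_self (x : V) : Dt x x = 0 := by unfold Dt; ring

lemma Dt_antisymm (x y : V) : Dt x y = - Dt y x := by unfold Dt; ring

/-- Plücker relation. -/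
lemma pluecker (a b c d : V) : Dt a c * Dt b d = Dt a b * Dt c d + Dt a d * Dt b c := by
  unfold Dt; ring

/-- Cramer identity. -/
lemma cramer (v w x : V) (i : Fin 2) :
    Dt v w * x i = Dt x w * v i + Dt v x * w i := by
  fin_cases i <;> simp only [Fin.mk_zero, Fin.mk_one, Fin.isValue] <;> (unfold Dt; ring)

/-- linear functional given by u. -/
def uR (u : Fin 2 → ℝ) (x : V) : ℝ := ∑ i, (x i : ℝ) * u i

lemma uR_identity (u : Fin 2 → ℝ) (x y z : V) :
    (Dt y z : ℝ) * uR u x - (Dt x z : ℝ) * uR u y + (Dt x y : ℝ) * uR u z = 0 := by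
  unfold uR Dt
  simp only [Fin.sum_univ_two]
  push_cast
  ring

/-- transitivity of the angular order on u-positive vectors. -/
lemma Dt_trans (u : Fin 2 → ℝ) (x y w : V) (hx : 0 < uR u x) (hy : 0 < uR u y)
    (hw : 0 < uR u w) (h1 : 1 ≤ Dt x y) (h2 : 1 ≤ Dt y w) : 1 ≤ Dt x w := by
  have hid := uR_identity u x y w
  -- (Dt y w) * uR x - (Dt x w) * uR y + (Dt x y) * uR w = 0
  have h1' : (1 : ℝ) ≤ (Dt x y : ℝ) := by exact_mod_cast h1
  have h2' : (1 : ℝ) ≤ (Dt y w : ℝ) := by exact_mod_cast h2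
  have hpos : 0 < (Dt x w : ℝ) * uR u y := by nlinarith
  have : 0 < (Dt x w : ℝ) := by
    by_contra h
    push_neg at h
    nlinarith
  have : 0 < Dt x w := by exact_mod_cast this
  omega



/-- normalized nonnegative integer combination over the whole finset B. -/
def MB (B : Finset V) (z : V) : Prop :=
  ∃ c : V → ℕ, ∀ i, z i = ∑ b ∈ B, (c b : ℤ) * b i

lemma nncomb_of_MB {B : Finset V} {z : V} (h : MB B z) : NNCombM (↑B) z := by
  obtain ⟨c, hc⟩ := h
  exact ⟨B, c, by simp, hc⟩

lemma MB_of_nncomb {B : Finset V} {z : V} (h : NNCombM (↑B) z) : MB B z := by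
  obtain ⟨s, c, hs, hc⟩ := h
  have hsB : s ⊆ B := by exact_mod_cast hs
  refine ⟨fun b => if b ∈ s then c b else 0, fun i => ?_⟩
  rw [hc i, ← Finset.sum_subset hsB]
  · exact Finset.sum_congr rfl (fun b hb => by simp [hb])
  · intro b _ hbs; simp [hbs]

lemma MB_mem {B : Finset V} {b : V} (hb : b ∈ B) : MB B b := by
  refine ⟨fun x => if x = b then 1 else 0, fun i => ?_⟩
  rw [Finset.sum_eq_single b]
  · simp
  · intro x _ hx; simp [hx]
  · intro h; exact absurd hb h

lemma MB_add {B : Finset V} {x y : V} (hx : MB B x) (hy : MB B y) :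
    MB B (fun i => x i + y i) := by
  obtain ⟨c, hc⟩ := hx
  obtain ⟨d, hd⟩ := hy
  refine ⟨fun b => c b + d b, fun i => ?_⟩
  simp only [hc i, hd i, ← Finset.sum_add_distrib]
  apply Finset.sum_congr rfl
  intro b _
  push_cast
  ring

lemma MB_uR {B : Finset V} {u : Fin 2 → ℝ} {z : V} {c : V → ℕ}
    (hc : ∀ i, z i = ∑ b ∈ B, (c b : ℤ) * b i) :
    uR u z = ∑ b ∈ B, (c b : ℝ) * uR u b := by
  unfold uR
  calc ∑ i, (z i:ℝ) * u i = ∑ i : Fin 2, ∑ b ∈ B, ((c b:ℝ) * (b i:ℝ)) * u i := by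
        apply Finset.sum_congr rfl; intro i _
        rw [hc i]; push_cast; rw [Finset.sum_mul]
    _ = ∑ b ∈ B, ∑ i : Fin 2, ((c b:ℝ) * (b i:ℝ)) * u i := Finset.sum_comm
    _ = ∑ b ∈ B, (c b:ℝ) * ∑ i, (b i:ℝ) * u i := by
        apply Finset.sum_congr rfl; intro b _
        rw [Finset.mul_sum]; apply Finset.sum_congr rfl; intro i _; ring

lemma MB_zero_of_coeffs {B : Finset V} {z : V} {c : V → ℕ}
    (hc : ∀ i, z i = ∑ b ∈ B, (c b : ℤ) * b i) (h0 : ∀ b ∈ B, c b = 0) : z = 0 := by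
  funext i
  rw [hc i]
  simp only [Pi.zero_apply]
  apply Finset.sum_eq_zero
  intro b hb
  simp [h0 b hb]

/-- u-weight of a nonzero monoid element is positive. -/
lemma MB_uR_pos {B : Finset V} {u : Fin 2 → ℝ} (hu : ∀ b ∈ B, 0 < uR u b)
    {z : V} (hz : MB B z) (hz0 : z ≠ 0) : 0 < uR u z := by
  obtain ⟨c, hc⟩ := hz
  rw [MB_uR hc]
  have hex : ∃ b ∈ B, c b ≠ 0 := by
    by_contra h
    push_neg at h
    exact hz0 (MB_zero_of_coeffs hc h)
  obtain ⟨b0, hb0, hb0c⟩ := hex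
  have : (c b0 : ℝ) * uR u b0 ≤ ∑ b ∈ B, (c b : ℝ) * uR u b := by
    apply Finset.single_le_sum (f := fun b => (c b : ℝ) * uR u b) _ hb0
    intro b hb
    exact mul_nonneg (by positivity) (le_of_lt (hu b hb))
  have h1 : (1:ℝ) ≤ (c b0 : ℝ) := by exact_mod_cast Nat.one_le_iff_ne_zero.2 hb0c
  nlinarith [hu b0 hb0]

lemma coneM_single {S : Set V} {b : V} (hb : b ∈ S) :
    ConeM S (fun i => (b i : ℝ)) := by
  refine ⟨{b}, fun x => if x = b then 1 else 0, by simpa using hb, ?_, ?_⟩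
  · intro x; dsimp only; split <;> norm_num
  · intro i; simp

lemma coneM_pair {S : Set V} {v w : V} (hv : v ∈ S) (hw : w ∈ S) (hD : 1 ≤ Dt v w)
    {x : V} (h1 : 0 ≤ Dt v x) (h2 : 0 ≤ Dt x w) :
    ConeM S (fun i => (x i : ℝ)) := by
  have hvw : v ≠ w := by
    intro h; rw [h, Dt_self] at hD; omega
  have hDpos : (0:ℝ) < (Dt v w : ℝ) := by exact_mod_cast hD
  refine ⟨{v, w}, fun y => if y = v then (Dt x w : ℝ)/(Dt v w : ℝ)
      else if y = w then (Dt v x : ℝ)/(Dt v w : ℝ) else 0, ?_, ?_, ?_⟩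
  · intro y hy
    simp only [Finset.coe_insert, Finset.coe_singleton, Set.mem_insert_iff,
      Set.mem_singleton_iff] at hy
    rcases hy with h | h <;> subst h <;> assumption
  · intro y
    dsimp only
    split
    · apply div_nonneg _ (le_of_lt hDpos); exact_mod_cast h2
    · split
      · apply div_nonneg _ (le_of_lt hDpos); exact_mod_cast h1
      · exact le_refl 0
  · intro i
    rw [Finset.sum_pair hvw]
    have hkey : (Dt v w : ℝ) * (x i : ℝ) = (Dt x w : ℝ) * (v i : ℝ) + (Dt v x : ℝ) * (w i : ℝ) := by
      exact_mod_cast congrArg (Int.cast : ℤ → ℝ) (cramer v w x i)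
    simp only [if_pos rfl, if_neg hvw, if_neg (Ne.symm hvw), ↓reduceIte]
    field_simp
    linarith [hkey]

/-- peel off one generator from a nonzero monoid element. -/
lemma MB_peel {B : Finset V} {z : V} (hz : MB B z) (hz0 : z ≠ 0) :
    ∃ b ∈ B, ∃ m : V, MB B m ∧ ∀ i, z i = b i + m i := by
  obtain ⟨c, hc⟩ := hz
  have hex : ∃ b ∈ B, c b ≠ 0 := by
    by_contra h
    push_neg at h
    exact hz0 (MB_zero_of_coeffs hc h)
  obtain ⟨b0, hb0, hb0c⟩ := hex
  refine ⟨b0, hb0, fun i => z i - b0 i,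
    ⟨fun b => if b = b0 then c b0 - 1 else c b, fun i => ?_⟩, fun i => by ring⟩
  have hsplit : ∀ d : V → ℕ,
      ∑ b ∈ B, (d b : ℤ) * b i = (d b0 : ℤ) * b0 i + ∑ b ∈ B.erase b0, (d b : ℤ) * b i :=
    fun d => (Finset.add_sum_erase B (fun b => ((d b : ℤ) * b i)) hb0).symm
  dsimp only
  have hsame : ∑ b ∈ B.erase b0, ((if b = b0 then c b0 - 1 else c b : ℕ) : ℤ) * b i
      = ∑ b ∈ B.erase b0, (c b : ℤ) * b i := by
    apply Finset.sum_congr rfl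
    intro b hb
    rw [if_neg (Finset.ne_of_mem_erase hb)]
  rw [hsplit (fun b => if b = b0 then c b0 - 1 else c b), hsame, if_pos rfl, hc i, hsplit c]
  have h1 : 1 ≤ c b0 := Nat.one_le_iff_ne_zero.2 hb0c
  push_cast [h1]
  ring

lemma vec_eq_zero {x : V} (h0 : x 0 = 0) (h1 : x 1 = 0) : x = 0 := by
  funext i
  fin_cases i <;> simp only [Fin.mk_zero, Fin.mk_one, Fin.isValue, Pi.zero_apply]
  exacts [h0, h1]

lemma uR_zero (u : Fin 2 → ℝ) : uR u 0 = 0 := by simp [uR]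

lemma MB_smul {B : Finset V} {x : V} (hx : MB B x) (n : ℕ) :
    MB B (fun i => (n : ℤ) * x i) := by
  obtain ⟨c, hc⟩ := hx
  refine ⟨fun b => n * c b, fun i => ?_⟩
  simp only [hc i, Finset.mul_sum]
  apply Finset.sum_congr rfl
  intro b _
  push_cast
  ring

/-- every element of B is irreducible in the monoid. -/
lemma irred {B : Finset V} {u : Fin 2 → ℝ} (hu : ∀ b ∈ B, 0 < uR u b)
    (hgen : ∀ z : V, ConeM ↑B (fun i => (z i : ℝ)) → NNCombM ↑B z)
    (hmin : ∀ B' : Finset V, B' ⊂ B →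
      ¬ ∀ z : V, ConeM ↑B (fun i => (z i : ℝ)) → NNCombM ↑B' z)
    {b : V} (hb : b ∈ B) {x y : V} (hx : MB B x) (hy : MB B y)
    (hx0 : x ≠ 0) (hy0 : y ≠ 0) (hxy : ∀ i, b i = x i + y i) : False := by
  obtain ⟨cx, hcx⟩ := hx
  obtain ⟨cy, hcy⟩ := hy
  set c : V → ℕ := fun e => cx e + cy e with hcdef
  have hcb : ∀ i, b i = ∑ e ∈ B, (c e : ℤ) * e i := by
    intro i
    rw [hxy i, hcx i, hcy i, ← Finset.sum_add_distrib]
    apply Finset.sum_congr rfl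
    intro e _
    simp only [hcdef]
    push_cast
    ring
  by_cases hc0 : c b = 0
  · -- b is generated by B.erase b; contradict minimality
    apply hmin (B.erase b) (Finset.erase_ssubset hb)
    intro z hz
    obtain ⟨d, hd⟩ := MB_of_nncomb (hgen z hz)
    refine ⟨B.erase b, fun e => d e + d b * c e, by simp, fun i => ?_⟩
    have hbrep : ∑ e ∈ B.erase b, (c e : ℤ) * e i = b i := by
      rw [hcb i, ← Finset.add_sum_erase _ (fun e => ((c e : ℤ) * e i)) hb, hc0]
      push_cast
      ring
    have hzrep : ∑ e ∈ B.erase b, (d e : ℤ) * e i = z i - (d b : ℤ) * b i := by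
      rw [hd i, ← Finset.add_sum_erase _ (fun e => ((d e : ℤ) * e i)) hb]
      ring
    calc z i = (z i - (d b : ℤ) * b i) + (d b : ℤ) * b i := by ring
      _ = ∑ e ∈ B.erase b, ((d e : ℤ) + (d b : ℤ) * (c e : ℤ)) * e i := by
          rw [← hzrep, ← hbrep, Finset.mul_sum, ← Finset.sum_add_distrib]
          apply Finset.sum_congr rfl
          intro e _
          ring
      _ = ∑ e ∈ B.erase b, ((d e + d b * c e : ℕ) : ℤ) * e i := by
          apply Finset.sum_congr rfl
          intro e _
          push_cast
          ring
  · -- c b ≥ 1 : forces trivial representation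
    have hub := hu b hb
    have hW : uR u b = ∑ e ∈ B, (c e : ℝ) * uR u e := MB_uR hcb
    have hWsplit : uR u b = (c b : ℝ) * uR u b + ∑ e ∈ B.erase b, (c e : ℝ) * uR u e := by
      conv_lhs => rw [hW]
      exact (Finset.add_sum_erase _ (fun e => ((c e : ℝ) * uR u e)) hb).symm
    set S := ∑ e ∈ B.erase b, (c e : ℝ) * uR u e with hSdef
    have hSnn : 0 ≤ S := by
      apply Finset.sum_nonneg
      intro e he
      exact mul_nonneg (by positivity) (le_of_lt (hu e (Finset.mem_of_mem_erase he)))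
    have hcb1 : (1 : ℝ) ≤ (c b : ℝ) := by
      exact_mod_cast Nat.one_le_iff_ne_zero.2 hc0
    have hS0 : S = 0 ∧ (c b : ℝ) = 1 := by
      constructor <;> nlinarith
    have hcb1' : c b = 1 := by exact_mod_cast hS0.2
    have hzero : ∀ e ∈ B.erase b, c e = 0 := by
      intro e he
      have := (Finset.sum_eq_zero_iff_of_nonneg (fun e he =>
        mul_nonneg (by positivity) (le_of_lt (hu e (Finset.mem_of_mem_erase he))))).1 hS0.1 e he
      have hue := hu e (Finset.mem_of_mem_erase he)
      have : (c e : ℝ) = 0 := by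
        rcases mul_eq_zero.1 this with h | h
        · exact h
        · exact absurd h (ne_of_gt hue)
      exact_mod_cast this
    -- one of cx b, cy b is zero
    have hsum1 : cx b + cy b = 1 := hcb1'
    have hcases : cx b = 0 ∨ cy b = 0 := by omega
    rcases hcases with h | h
    · apply hx0
      apply MB_zero_of_coeffs hcx
      intro e he
      by_cases heb : e = b
      · rw [heb]; exact h
      · have := hzero e (Finset.mem_erase.2 ⟨heb, he⟩)
        simp only [hcdef] at this
        omega
    · apply hy0
      apply MB_zero_of_coeffs hcy
      intro e he
      by_cases heb : e = b
      · rw [heb]; exact h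
      · have := hzero e (Finset.mem_erase.2 ⟨heb, he⟩)
        simp only [hcdef] at this
        omega

/-- primitivity of basis elements, in Bezout form. -/
lemma prim_of_mem {B : Finset V} {u : Fin 2 → ℝ} (hu : ∀ b ∈ B, 0 < uR u b)
    (hgen : ∀ z : V, ConeM ↑B (fun i => (z i : ℝ)) → NNCombM ↑B z)
    (hmin : ∀ B' : Finset V, B' ⊂ B →
      ¬ ∀ z : V, ConeM ↑B (fun i => (z i : ℝ)) → NNCombM ↑B' z)
    {b : V} (hb : b ∈ B) : ∃ a c : ℤ, a * b 0 + c * b 1 = 1 := by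
  have hb0 : b ≠ 0 := by
    intro h
    have := hu b hb
    rw [h, uR_zero] at this
    linarith
  set g : ℕ := Int.gcd (b 0) (b 1) with hgdef
  have hgne : g ≠ 0 := by
    intro h
    rw [hgdef] at h
    rw [Int.gcd_eq_zero_iff] at h
    exact hb0 (vec_eq_zero h.1 h.2)
  by_cases hg1 : g = 1
  · have : IsCoprime (b 0) (b 1) := Int.isCoprime_iff_gcd_eq_one.2 hg1
    obtain ⟨a, c, h⟩ := this
    exact ⟨a, c, by linarith⟩
  · exfalso
    have hg2 : 2 ≤ g := by omega
    set q : V := fun i => b i / (g : ℤ) with hqdef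
    have hdvd : ∀ i : Fin 2, (g : ℤ) ∣ b i := by
      intro i
      fin_cases i <;> simp only [Fin.mk_zero, Fin.mk_one, Fin.isValue]
      · exact Int.gcd_dvd_left _ _
      · exact Int.gcd_dvd_right _ _
    have hq : ∀ i, b i = (g : ℤ) * q i := by
      intro i
      rw [hqdef]
      exact (Int.mul_ediv_cancel' (hdvd i)).symm
    have hgR : (0:ℝ) < (g:ℝ) := by
      have : (1:ℕ) ≤ g := by omega
      exact_mod_cast Nat.lt_of_lt_of_le Nat.zero_lt_one this
    have hqcone : ConeM ↑B (fun i => (q i : ℝ)) := by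
      refine ⟨{b}, fun x => if x = b then (1/(g:ℝ)) else 0, by simpa using hb, ?_, ?_⟩
      · intro x; dsimp only; split
        · positivity
        · exact le_refl 0
      · intro i
        simp only [Finset.sum_singleton, if_pos rfl, ↓reduceIte]
        have : (b i : ℝ) = (g : ℝ) * (q i : ℝ) := by exact_mod_cast congrArg Int.cast (hq i)
        rw [this]
        field_simp
    have hqM : MB B q := MB_of_nncomb (hgen q hqcone)
    have hq0 : q ≠ 0 := by
      intro h
      apply hb0
      funext i
      have h2 := congrFun h i
      simp only [Pi.zero_apply] at h2
      simp only [Pi.zero_apply, hq i, h2, mul_zero]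
    have hyM : MB B (fun i => ((g - 1 : ℕ) : ℤ) * q i) := MB_smul hqM (g - 1)
    have hy0 : (fun i => ((g - 1 : ℕ) : ℤ) * q i) ≠ 0 := by
      intro h
      apply hq0
      funext i
      have := congrFun h i
      simp only [Pi.zero_apply] at this ⊢
      have hg1' : ((g - 1 : ℕ) : ℤ) ≠ 0 := by
        have h3 : g - 1 ≠ 0 := by omega
        exact_mod_cast h3
      rcases mul_eq_zero.1 this with h | h
      · exact absurd h hg1'
      · exact h
    exact irred hu hgen hmin hb hqM hyM hq0 hy0 (fun i => by
      rw [hq i]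
      have : 1 ≤ g := by omega
      push_cast [this]
      ring)

lemma par_of_prim {x y : V} (h : Dt x y = 0) (hp : ∃ a c : ℤ, a * y 0 + c * y 1 = 1) :
    ∃ t : ℤ, ∀ i, x i = t * y i := by
  obtain ⟨a, c, hac⟩ := hp
  unfold Dt at h
  refine ⟨a * x 0 + c * x 1, fun i => ?_⟩
  fin_cases i <;> simp only [Fin.mk_zero, Fin.mk_one, Fin.isValue]
  · linear_combination (-(x 0)) * hac + c * h
  · linear_combination (-(x 1)) * hac - a * h

lemma uR_of_par (u : Fin 2 → ℝ) {x y : V} {t : ℤ} (ht : ∀ i, x i = t * y i) :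
    uR u x = (t : ℝ) * uR u y := by
  unfold uR
  rw [Finset.mul_sum]
  apply Finset.sum_congr rfl
  intro i _
  rw [ht i]
  push_cast
  ring

lemma prim_eq (u : Fin 2 → ℝ) {x y : V} (hx : ∃ a c : ℤ, a * x 0 + c * x 1 = 1)
    (hy : ∃ a c : ℤ, a * y 0 + c * y 1 = 1) (hxy : Dt x y = 0)
    (hux : 0 < uR u x) (huy : 0 < uR u y) : x = y := by
  obtain ⟨t, ht⟩ := par_of_prim hxy hy
  have huRt := uR_of_par u ht
  have htpos : 0 < (t : ℝ) := by
    by_contra hcon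
    push_neg at hcon
    nlinarith
  have ht1 : 1 ≤ t := by exact_mod_cast htpos
  obtain ⟨a, c, hac⟩ := hx
  have hmul : t * (a * y 0 + c * y 1) = 1 := by
    rw [ht 0, ht 1] at hac
    linarith [hac]
  have hdvd : t ∣ 1 := ⟨a * y 0 + c * y 1, hmul.symm⟩
  have : t ≤ 1 := Int.le_of_dvd one_pos hdvd
  have ht1' : t = 1 := le_antisymm this ht1
  funext i
  rw [ht i, ht1', one_mul]

lemma imp1 (v w b z : V) : (Dt b z + Dt z w) * Dt v w - (Dt v z + Dt z w) * Dt b w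
    = Dt z w * (Dt v w - Dt v b - Dt b w) := by unfold Dt; ring

lemma imp2 (v w b z : V) : (Dt v z + Dt z b) * Dt v w - (Dt v z + Dt z w) * Dt v b
    = Dt v z * (Dt v w - Dt v b - Dt b w) := by unfold Dt; ring

lemma MB_Dt_left {B : Finset V} {x : V} {cc : V → ℕ}
    (hcc : ∀ i, x i = ∑ b ∈ B, (cc b : ℤ) * b i) (v : V) :
    Dt v x = ∑ b ∈ B, (cc b : ℤ) * Dt v b := by
  simp only [Dt]
  rw [hcc 0, hcc 1, Finset.mul_sum, Finset.mul_sum, ← Finset.sum_sub_distrib]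
  exact Finset.sum_congr rfl (fun b _ => by ring)

lemma MB_Dt_right {B : Finset V} {x : V} {cc : V → ℕ}
    (hcc : ∀ i, x i = ∑ b ∈ B, (cc b : ℤ) * b i) (w : V) :
    Dt x w = ∑ b ∈ B, (cc b : ℤ) * Dt b w := by
  simp only [Dt]
  rw [hcc 0, hcc 1, Finset.sum_mul, Finset.sum_mul, ← Finset.sum_sub_distrib]
  exact Finset.sum_congr rfl (fun b _ => by ring)

set_option maxHeartbeats 2000000 in
/-- Structure theorem: angularly consecutive elements of a 2D Hilbert basis form a
unimodular pair. -/
lemma structure_thm {B : Finset V} {u : Fin 2 → ℝ} (hu : ∀ b ∈ B, 0 < uR u b)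
    (hgen : ∀ z : V, ConeM ↑B (fun i => (z i : ℝ)) → NNCombM ↑B z)
    (hmin : ∀ B' : Finset V, B' ⊂ B →
      ¬ ∀ z : V, ConeM ↑B (fun i => (z i : ℝ)) → NNCombM ↑B' z)
    {p p' : V} (hp : p ∈ B) (hp' : p' ∈ B) (hD1 : 1 ≤ Dt p p')
    (hcons : ∀ b ∈ B, ¬(1 ≤ Dt p b ∧ 1 ≤ Dt b p')) : Dt p p' = 1 := by
  by_contra hne
  have hD2 : 2 ≤ Dt p p' := by omega
  have hup := hu p hp
  have hup' := hu p' hp'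
  obtain ⟨a, c, hac⟩ := prim_of_mem hu hgen hmin hp
  obtain ⟨a', c', hac'⟩ := prim_of_mem hu hgen hmin hp'
  -- Bezout point z
  set bez : V := ![-c, a] with hbezdef
  have hbez0 : bez 0 = -c := rfl
  have hbez1 : bez 1 = a := rfl
  have hDpbez : Dt p bez = 1 := by
    unfold Dt; rw [hbez0, hbez1]; linarith
  set k : ℤ := Dt bez p' / Dt p p' with hkdef
  set z : V := fun i => bez i - k * p i with hzdef
  have hz0c : z 0 = bez 0 - k * p 0 := rfl
  have hz1c : z 1 = bez 1 - k * p 1 := rfl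
  have hDpz : Dt p z = 1 := by
    have : Dt p z = Dt p bez := by unfold Dt; rw [hz0c, hz1c]; ring
    rw [this, hDpbez]
  have hDzp' : Dt z p' = Dt bez p' % Dt p p' := by
    have h1 : Dt z p' = Dt bez p' - k * Dt p p' := by
      unfold Dt; rw [hz0c, hz1c]; ring
    rw [h1, hkdef, Int.emod_def]
    ring
  have hDne : Dt p p' ≠ 0 := by omega
  have hr0 : 0 ≤ Dt z p' := by rw [hDzp']; exact Int.emod_nonneg _ hDne
  have hrD : Dt z p' < Dt p p' := by rw [hDzp']; exact Int.emod_lt_of_pos _ (by omega)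
  have hr1 : 1 ≤ Dt z p' := by
    rcases eq_or_lt_of_le hr0 with h | h
    · exfalso
      obtain ⟨t, ht⟩ := par_of_prim h.symm ⟨a', c', hac'⟩
      have : Dt p z = t * Dt p p' := by
        unfold Dt; rw [ht 0, ht 1]; ring
      rw [hDpz] at this
      have hdvd : Dt p p' ∣ 1 := ⟨t, by linarith⟩
      have := Int.le_of_dvd one_pos hdvd
      omega
    · omega
  have hzcone : ConeM ↑B (fun i => (z i : ℝ)) :=
    coneM_pair (Finset.mem_coe.2 hp) (Finset.mem_coe.2 hp') hD1 (by omega) hr0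
  have hzM : MB B z := MB_of_nncomb (hgen z hzcone)
  have hz0 : z ≠ 0 := by
    intro h
    rw [h] at hDpz
    unfold Dt at hDpz
    simp at hDpz
  have huz : 0 < uR u z := MB_uR_pos hu hzM hz0
  have hzB : z ∉ B := fun h => hcons z h ⟨by omega, hr1⟩
  have hzprim : ∃ a c : ℤ, a * z 0 + c * z 1 = 1 := by
    refine ⟨-(p 1), p 0, ?_⟩
    unfold Dt at hDpz
    linarith
  have hznotpar : ∀ b ∈ B, Dt b z ≠ 0 := by
    intro b hb h
    have : b = z := prim_eq u (prim_of_mem hu hgen hmin hb) hzprim h (hu b hb) huz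
    rw [this] at hb
    exact hzB hb
  -- choose the maximizing pair
  set Pairs : Finset (V × V) := (B ×ˢ B).filter
    (fun q => 1 ≤ Dt q.1 q.2 ∧ 1 ≤ Dt q.1 z ∧ 1 ≤ Dt z q.2) with hPdef
  have hppP : (p, p') ∈ Pairs := by
    rw [hPdef, Finset.mem_filter, Finset.mem_product]
    refine ⟨⟨hp, hp'⟩, hD1, ?_, hr1⟩
    show 1 ≤ Dt p z
    omega
  obtain ⟨vw, hvwP, hmaxf⟩ := Finset.exists_max_image Pairs
    (fun q => ((Dt q.1 z + Dt z q.2 : ℤ) : ℚ) / ((Dt q.1 q.2 : ℤ) : ℚ)) ⟨(p, p'), hppP⟩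
  obtain ⟨v, w⟩ := vw
  have hvwP' := hvwP
  rw [hPdef, Finset.mem_filter, Finset.mem_product] at hvwP'
  have hv : v ∈ B := hvwP'.1.1
  have hw : w ∈ B := hvwP'.1.2
  have hDvw : 1 ≤ Dt v w := hvwP'.2.1
  have hDvz : 1 ≤ Dt v z := hvwP'.2.2.1
  have hDzw : 1 ≤ Dt z w := hvwP'.2.2.2
  have hmax' : ∀ a b : V, (a, b) ∈ Pairs →
      ((Dt a z + Dt z b : ℤ) : ℚ) / ((Dt a b : ℤ) : ℚ)
        ≤ ((Dt v z + Dt z w : ℤ) : ℚ) / ((Dt v w : ℤ) : ℚ) :=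
    fun a b h => hmaxf (a, b) h
  have huv := hu v hv
  have huw := hu w hw
  -- the improvement inequality from maximality
  have himp : ∀ a b : V, (a, b) ∈ Pairs →
      (Dt a z + Dt z b) * Dt v w ≤ (Dt v z + Dt z w) * Dt a b := by
    intro a b hq'
    have hmem := hq'
    rw [hPdef, Finset.mem_filter, Finset.mem_product] at hmem
    have hq1 : 1 ≤ Dt a b := hmem.2.1
    have hf := hmax' a b hq'
    have hd1 : (0:ℚ) < ((Dt a b : ℤ) : ℚ) := by exact_mod_cast hq1
    have hd2 : (0:ℚ) < ((Dt v w : ℤ) : ℚ) := by exact_mod_cast hDvw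
    rw [div_le_div_iff₀ hd1 hd2] at hf
    exact_mod_cast hf
  -- Claim Φ : every element of B is on or above the chord [v,w]
  have hPhi : ∀ b ∈ B, Dt v w ≤ Dt v b + Dt b w := by
    intro b hb
    by_contra hcon
    push_neg at hcon
    have hfac : 1 ≤ Dt v w - Dt v b - Dt b w := by omega
    have hub := hu b hb
    have hbz := hznotpar b hb
    rcases le_or_gt 0 (Dt v b) with hvb | hvb
    · rcases le_or_gt 0 (Dt b w) with hbw | hbw
      · -- b inside the cone of (v,w)
        have hvb1 : 1 ≤ Dt v b := by
          rcases eq_or_lt_of_le hvb with h | h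
          · exfalso
            have : v = b := prim_eq u (prim_of_mem hu hgen hmin hv)
              (prim_of_mem hu hgen hmin hb) h.symm huv hub
            rw [← this, Dt_self] at hcon
            rw [← this] at hbw
            omega
          · omega
        have hbw1 : 1 ≤ Dt b w := by
          rcases eq_or_lt_of_le hbw with h | h
          · exfalso
            have : b = w := prim_eq u (prim_of_mem hu hgen hmin hb)
              (prim_of_mem hu hgen hmin hw) h.symm hub huw
            rw [this, Dt_self] at hcon
            rw [this] at hvb1
            omega
          · omega
        rcases hbz.lt_or_gt with hneg | hpos
        · -- z is to the right of b : use pair (v, b)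
          have hmem : (v, b) ∈ Pairs := by
            rw [hPdef, Finset.mem_filter, Finset.mem_product]
            refine ⟨⟨hv, hb⟩, hvb1, hDvz, ?_⟩
            show 1 ≤ Dt z b
            have := Dt_antisymm b z
            omega
          have h2 := himp v b hmem
          have hkey := imp2 v w b z
          have hprod : 0 < Dt v z * (Dt v w - Dt v b - Dt b w) :=
            mul_pos (by omega) (by omega)
          linarith
        · -- z is to the left of b : use pair (b, w)
          have hmem : (b, w) ∈ Pairs := by
            rw [hPdef, Finset.mem_filter, Finset.mem_product]
            refine ⟨⟨hb, hw⟩, hbw1, ?_, hDzw⟩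
            show 1 ≤ Dt b z
            omega
          have h2 := himp b w hmem
          have hkey := imp1 v w b z
          have hprod : 0 < Dt z w * (Dt v w - Dt v b - Dt b w) :=
            mul_pos (by omega) (by omega)
          linarith
      · -- b beyond w : use pair (v, b)
        have hwb : 1 ≤ Dt w b := by have := Dt_antisymm b w; omega
        have hzb : 1 ≤ Dt z b := Dt_trans u z w b huz huw hub hDzw hwb
        have hvb1 : 1 ≤ Dt v b := Dt_trans u v w b huv huw hub hDvw hwb
        have hmem : (v, b) ∈ Pairs := by
          rw [hPdef, Finset.mem_filter, Finset.mem_product]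
          exact ⟨⟨hv, hb⟩, hvb1, hDvz, hzb⟩
        have h2 := himp v b hmem
        have hkey := imp2 v w b z
        have hprod : 0 < Dt v z * (Dt v w - Dt v b - Dt b w) :=
          mul_pos (by omega) (by omega)
        linarith
    · -- b below v
      have hbv1 : 1 ≤ Dt b v := by have := Dt_antisymm v b; omega
      have hbz1 : 1 ≤ Dt b z := Dt_trans u b v z hub huv huz hbv1 hDvz
      have hbw1 : 1 ≤ Dt b w := Dt_trans u b v w hub huv huw hbv1 hDvw
      have hmem : (b, w) ∈ Pairs := by
        rw [hPdef, Finset.mem_filter, Finset.mem_product]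
        exact ⟨⟨hb, hw⟩, hbw1, hbz1, hDzw⟩
      have h2 := himp b w hmem
      have hkey := imp1 v w b z
      have hprod : 0 < Dt z w * (Dt v w - Dt v b - Dt b w) :=
        mul_pos (by omega) (by omega)
      linarith
  -- Φ extends to all nonzero monoid elements
  have hGM : ∀ x : V, MB B x → x ≠ 0 → Dt v w ≤ Dt v x + Dt x w := by
    intro x hx hx0
    obtain ⟨cc, hcc⟩ := hx
    have h1 := MB_Dt_left hcc v
    have h2 := MB_Dt_right hcc w
    have hsum : Dt v x + Dt x w = ∑ b ∈ B, (cc b : ℤ) * (Dt v b + Dt b w) := by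
      rw [h1, h2, ← Finset.sum_add_distrib]
      exact Finset.sum_congr rfl (fun b _ => by ring)
    have hlow : ∑ b ∈ B, (cc b : ℤ) * Dt v w ≤ ∑ b ∈ B, (cc b : ℤ) * (Dt v b + Dt b w) :=
      Finset.sum_le_sum (fun b hb => mul_le_mul_of_nonneg_left (hPhi b hb) (by positivity))
    have hfac : (∑ b ∈ B, (cc b : ℤ)) * Dt v w = ∑ b ∈ B, (cc b : ℤ) * Dt v w :=
      Finset.sum_mul _ _ _
    have hex : ∃ b ∈ B, cc b ≠ 0 := by
      by_contra h
      push_neg at h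
      exact hx0 (MB_zero_of_coeffs hcc h)
    obtain ⟨b0, hb0, hb0c⟩ := hex
    have hS1 : 1 ≤ ∑ b ∈ B, (cc b : ℤ) := by
      have h1' : (cc b0 : ℤ) ≤ ∑ b ∈ B, (cc b : ℤ) :=
        Finset.single_le_sum (f := fun b => (cc b : ℤ)) (fun b _ => by positivity) hb0
      have : 1 ≤ (cc b0 : ℤ) := by exact_mod_cast Nat.one_le_iff_ne_zero.2 hb0c
      omega
    nlinarith
  -- positions of p and p' relative to (v,w)
  have hDvp' : 1 ≤ Dt v p' := Dt_trans u v z p' huv huz hup' hDvz hr1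
  have hDpw : 1 ≤ Dt p w := Dt_trans u p z w hup huz huw (by omega) hDzw
  have hDvp : 0 ≤ Dt v p := by
    have h := hcons v hv
    have : ¬ (1 ≤ Dt p v) := fun hx => h ⟨hx, hDvp'⟩
    have := Dt_antisymm p v
    omega
  have hDp'w : 0 ≤ Dt p' w := by
    have h := hcons w hw
    have : ¬ (1 ≤ Dt w p') := fun hx => h ⟨hDpw, hx⟩
    have := Dt_antisymm w p'
    omega
  have hv0 : v ≠ 0 := by
    intro h; rw [h, uR_zero] at huv; linarith
  have hw0 : w ≠ 0 := by
    intro h; rw [h, uR_zero] at huw; linarith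
  -- G p < 2 G(chord)
  have hGp : Dt v p + Dt p w ≤ 2 * Dt v w - 1 := by
    by_contra hcon
    push_neg at hcon
    rcases le_or_gt (Dt v w) (Dt p w) with hcase | hcase
    · set m : V := fun i => p i - v i with hmdef
      have hDvm : Dt v m = Dt v p := by unfold Dt; simp only [hmdef]; ring
      have hDmw : Dt m w = Dt p w - Dt v w := by unfold Dt; simp only [hmdef]; ring
      have hmcone : ConeM ↑B (fun i => (m i : ℝ)) :=
        coneM_pair (Finset.mem_coe.2 hv) (Finset.mem_coe.2 hw) hDvw
          (by omega) (by omega)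
      have hmM : MB B m := MB_of_nncomb (hgen m hmcone)
      have hm0 : m ≠ 0 := by
        intro h
        have hpv : p = v := by
          funext i
          have := congrFun h i
          simp only [hmdef, Pi.zero_apply] at this
          linarith
        rw [hpv, Dt_self] at hcon
        rw [hpv] at hcase
        omega
      exact irred hu hgen hmin hp (MB_mem hv) hmM hv0 hm0
        (fun i => by simp only [hmdef]; ring)
    · set m : V := fun i => p i - w i with hmdef
      have hDvm : Dt v m = Dt v p - Dt v w := by unfold Dt; simp only [hmdef]; ring
      have hDmw : Dt m w = Dt p w := by unfold Dt; simp only [hmdef]; ring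
      have hmcone : ConeM ↑B (fun i => (m i : ℝ)) :=
        coneM_pair (Finset.mem_coe.2 hv) (Finset.mem_coe.2 hw) hDvw
          (by omega) (by omega)
      have hmM : MB B m := MB_of_nncomb (hgen m hmcone)
      have hm0 : m ≠ 0 := by
        intro h
        have hpw : p = w := by
          funext i
          have := congrFun h i
          simp only [hmdef, Pi.zero_apply] at this
          linarith
        rw [hpw, Dt_self] at hcon
        rw [hpw] at hcase
        omega
      exact irred hu hgen hmin hp (MB_mem hw) hmM hw0 hm0
        (fun i => by simp only [hmdef]; ring)
  -- G p' < 2 G(chord)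
  have hGp' : Dt v p' + Dt p' w ≤ 2 * Dt v w - 1 := by
    by_contra hcon
    push_neg at hcon
    rcases le_or_gt (Dt v w) (Dt v p') with hcase | hcase
    · set m : V := fun i => p' i - w i with hmdef
      have hDvm : Dt v m = Dt v p' - Dt v w := by unfold Dt; simp only [hmdef]; ring
      have hDmw : Dt m w = Dt p' w := by unfold Dt; simp only [hmdef]; ring
      have hmcone : ConeM ↑B (fun i => (m i : ℝ)) :=
        coneM_pair (Finset.mem_coe.2 hv) (Finset.mem_coe.2 hw) hDvw
          (by omega) (by omega)
      have hmM : MB B m := MB_of_nncomb (hgen m hmcone)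
      have hm0 : m ≠ 0 := by
        intro h
        have hpw : p' = w := by
          funext i
          have := congrFun h i
          simp only [hmdef, Pi.zero_apply] at this
          linarith
        rw [hpw, Dt_self] at hcon
        rw [hpw] at hcase
        omega
      exact irred hu hgen hmin hp' (MB_mem hw) hmM hw0 hm0
        (fun i => by simp only [hmdef]; ring)
    · set m : V := fun i => p' i - v i with hmdef
      have hDvm : Dt v m = Dt v p' := by unfold Dt; simp only [hmdef]; ring
      have hDmw : Dt m w = Dt p' w - Dt v w := by unfold Dt; simp only [hmdef]; ring
      have hmcone : ConeM ↑B (fun i => (m i : ℝ)) :=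
        coneM_pair (Finset.mem_coe.2 hv) (Finset.mem_coe.2 hw) hDvw
          (by omega) (by omega)
      have hmM : MB B m := MB_of_nncomb (hgen m hmcone)
      have hm0 : m ≠ 0 := by
        intro h
        have hpv : p' = v := by
          funext i
          have := congrFun h i
          simp only [hmdef, Pi.zero_apply] at this
          linarith
        rw [hpv, Dt_self] at hcon
        rw [hpv] at hcase
        omega
      exact irred hu hgen hmin hp' (MB_mem hv) hmM hv0 hm0
        (fun i => by simp only [hmdef]; ring)
  -- upper bound for G z via the triangle
  have hpl1 := pluecker v p z p'
  have hpl2 := pluecker z p w p'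
  have hDzp : Dt z p = -1 := by have := Dt_antisymm p z; omega
  have hupper : (Dt v z + Dt z w) * Dt p p'
      = Dt z p' * (Dt v p + Dt p w) + (Dt v p' + Dt p' w) := by
    have hwp' : Dt w p' = - Dt p' w := by have := Dt_antisymm w p'; omega
    rw [hDpz] at hpl1
    rw [hDzp, hwp'] at hpl2
    linear_combination hpl1 + hpl2
  -- lower bound for G z via reducibility
  obtain ⟨b, hbB, m, hmM, hzm⟩ := MB_peel hzM hz0
  have hm0 : m ≠ 0 := by
    intro h
    apply hzB
    have : z = b := by
      funext i
      rw [hzm i, congrFun h i]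
      simp
    rw [this]
    exact hbB
  have hsplit1 : Dt v z = Dt v b + Dt v m := by
    unfold Dt; rw [hzm 0, hzm 1]; ring
  have hsplit2 : Dt z w = Dt b w + Dt m w := by
    unfold Dt; rw [hzm 0, hzm 1]; ring
  have hlower : 2 * Dt v w ≤ Dt v z + Dt z w := by
    have h1 := hPhi b hbB
    have h2 := hGM m hmM hm0
    omega
  -- contradiction
  have hrb : Dt z p' + 1 ≤ Dt p p' := by omega
  have hq1 : Dt z p' * (Dt v p + Dt p w) ≤ Dt z p' * (2 * Dt v w - 1) :=
    mul_le_mul_of_nonneg_left hGp hr0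
  have hq2 : (Dt z p' + 1) * (2 * Dt v w - 1) ≤ Dt p p' * (2 * Dt v w - 1) :=
    mul_le_mul_of_nonneg_right hrb (by omega)
  nlinarith [hupper, hlower, hq1, hq2, hGp', hD2, hDvw, mul_le_mul_of_nonneg_right hlower (by omega : (0:ℤ) ≤ Dt p p')]

set_option maxHeartbeats 2000000 in
theorem stmt7' (B : Finset (Fin 2 → ℤ))
    (hpointed : ∃ u : Fin 2 → ℝ, ∀ b ∈ B, 0 < ∑ i, (b i : ℝ) * u i)
    (hgen : ∀ z : Fin 2 → ℤ, ConeM ↑B (fun i => (z i : ℝ)) → NNCombM ↑B z)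
    (hmin : ∀ B' : Finset (Fin 2 → ℤ), B' ⊂ B →
      ¬ ∀ z : Fin 2 → ℤ, ConeM ↑B (fun i => (z i : ℝ)) → NNCombM ↑B' z) :
    ∀ B' ⊆ (↑B : Set V), ∀ z : V, ConeM B' (fun i => (z i : ℝ)) →
      NNCombM {b ∈ (↑B : Set V) | ConeM B' (fun i => (b i : ℝ))} z := by
  obtain ⟨u, hpt⟩ := hpointed
  have hu : ∀ b ∈ B, 0 < uR u b := fun b hb => hpt b hb
  intro B' hB' z hz
  by_cases hz0 : z = 0
  · exact ⟨∅, fun _ => 0, by simp, fun i => by simp [hz0]⟩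
  obtain ⟨s, lam, hsB', hlam, hsum0⟩ := hz
  have hsum : ∀ i, (z i : ℝ) = ∑ b ∈ s, lam b * (b i : ℝ) := hsum0
  have hsB : ∀ b ∈ s, b ∈ B := by
    intro b hb
    have : b ∈ (↑B : Set V) := hB' (hsB' hb)
    exact_mod_cast this
  -- the weighted determinant sum vanishes
  have key : ∑ b ∈ s, lam b * ((Dt b z : ℤ) : ℝ) = 0 := by
    have h0 := hsum 0
    have h1 := hsum 1
    calc ∑ b ∈ s, lam b * ((Dt b z : ℤ) : ℝ)
        = ∑ b ∈ s, ((lam b * (b 0 : ℝ)) * (z 1 : ℝ) - (lam b * (b 1 : ℝ)) * (z 0 : ℝ)) := by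
          apply Finset.sum_congr rfl
          intro b _
          unfold Dt
          push_cast
          ring
      _ = (∑ b ∈ s, lam b * (b 0 : ℝ)) * (z 1 : ℝ) - (∑ b ∈ s, lam b * (b 1 : ℝ)) * (z 0 : ℝ) := by
          rw [Finset.sum_sub_distrib, Finset.sum_mul, Finset.sum_mul]
      _ = 0 := by rw [← h0, ← h1]; ring
  -- positivity of the weight of z
  have hzuR : uR u z = ∑ b ∈ s, lam b * uR u b := by
    unfold uR
    calc ∑ i, (z i : ℝ) * u i = ∑ i : Fin 2, ∑ b ∈ s, (lam b * (b i : ℝ)) * u i := by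
          apply Finset.sum_congr rfl
          intro i _
          rw [hsum i, Finset.sum_mul]
      _ = ∑ b ∈ s, ∑ i : Fin 2, (lam b * (b i : ℝ)) * u i := Finset.sum_comm
      _ = ∑ b ∈ s, lam b * ∑ i, (b i : ℝ) * u i := by
          apply Finset.sum_congr rfl
          intro b _
          rw [Finset.mul_sum]
          exact Finset.sum_congr rfl (fun i _ => by ring)
  have hterm : ∀ b ∈ s, 0 ≤ lam b * uR u b :=
    fun b hb => mul_nonneg (hlam b) (le_of_lt (hu b (hsB b hb)))
  have huz : 0 < uR u z := by
    rcases eq_or_lt_of_le (Finset.sum_nonneg hterm) with h | h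
    · exfalso
      apply hz0
      have hall := (Finset.sum_eq_zero_iff_of_nonneg hterm).1 h.symm
      funext i
      have hzr : (z i : ℝ) = 0 := by
        rw [hsum i]
        apply Finset.sum_eq_zero
        intro b hb
        have := hall b hb
        rcases mul_eq_zero.1 this with h' | h'
        · rw [h', zero_mul]
        · exact absurd h' (ne_of_gt (hu b (hsB b hb)))
      show z i = 0
      exact_mod_cast hzr
    · rw [hzuR]; exact h
  by_cases hcaseA : ∀ b ∈ s, lam b ≠ 0 → Dt b z = 0
  · -- z is parallel to a single generator
    have hex : ∃ b ∈ s, lam b ≠ 0 := by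
      by_contra h
      push_neg at h
      apply hz0
      funext i
      have hzr : (z i : ℝ) = 0 := by
        rw [hsum i]
        exact Finset.sum_eq_zero (fun b hb => by rw [h b hb, zero_mul])
      show z i = 0
      exact_mod_cast hzr
    obtain ⟨b0, hb0s, hb0⟩ := hex
    have hb0B := hsB b0 hb0s
    have hpar : Dt z b0 = 0 := by
      have := hcaseA b0 hb0s hb0
      have h2 := Dt_antisymm b0 z
      omega
    obtain ⟨t, ht⟩ := par_of_prim hpar (prim_of_mem hu hgen hmin hb0B)
    have htpos : 0 < t := by
      have := uR_of_par u ht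
      by_contra hcon
      push_neg at hcon
      have : (t : ℝ) ≤ 0 := by exact_mod_cast hcon
      nlinarith [hu b0 hb0B]
    refine ⟨{b0}, fun x => if x = b0 then t.toNat else 0, ?_, ?_⟩
    · intro x hx
      simp only [Finset.coe_singleton, Set.mem_singleton_iff] at hx
      rw [hx]
      exact ⟨hB' (hsB' hb0s), coneM_single (hsB' hb0s)⟩
    · intro i
      rw [Finset.sum_singleton]
      show z i = ((if b0 = b0 then t.toNat else 0 : ℕ) : ℤ) * b0 i
      rw [if_pos rfl, ht i]
      congr 1
      omega
  · -- z lies strictly between two generators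
    push_neg at hcaseA
    obtain ⟨b1, hb1s, hb1lam, hb1z⟩ := hcaseA
    have hb1pos : 0 < lam b1 := lt_of_le_of_ne (hlam b1) (Ne.symm hb1lam)
    -- find a generator strictly to the left of z
    have hexv : ∃ v ∈ s, 0 < lam v ∧ 1 ≤ Dt v z := by
      by_contra h
      push_neg at h
      have hterms : ∀ b ∈ s, lam b * ((Dt b z : ℤ) : ℝ) ≤ 0 := by
        intro b hb
        rcases eq_or_lt_of_le (hlam b) with h0 | h0
        · rw [← h0, zero_mul]
        · have := h b hb h0
          have : (Dt b z : ℝ) ≤ 0 := by exact_mod_cast (by omega : Dt b z ≤ 0)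
          nlinarith
      have hstrict : lam b1 * ((Dt b1 z : ℤ) : ℝ) < 0 := by
        have hb1neg : Dt b1 z ≤ 0 := by
          by_contra h'
          exact absurd (h b1 hb1s hb1pos) (by omega)
        have : Dt b1 z < 0 := by omega
        have : ((Dt b1 z : ℤ) : ℝ) < 0 := by exact_mod_cast this
        nlinarith
      have : ∑ b ∈ s, lam b * ((Dt b z : ℤ) : ℝ) < 0 := by
        calc ∑ b ∈ s, lam b * ((Dt b z : ℤ) : ℝ)
            = lam b1 * ((Dt b1 z : ℤ) : ℝ)
              + ∑ b ∈ s.erase b1, lam b * ((Dt b z : ℤ) : ℝ) :=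
              (Finset.add_sum_erase s (fun b => lam b * ((Dt b z : ℤ) : ℝ)) hb1s).symm
          _ < 0 := by
              have : ∑ b ∈ s.erase b1, lam b * ((Dt b z : ℤ) : ℝ) ≤ 0 :=
                Finset.sum_nonpos (fun b hb => hterms b (Finset.mem_of_mem_erase hb))
              linarith
      linarith [key]
    have hexw : ∃ w ∈ s, 0 < lam w ∧ 1 ≤ Dt z w := by
      by_contra h
      push_neg at h
      have hterms : ∀ b ∈ s, 0 ≤ lam b * ((Dt b z : ℤ) : ℝ) := by
        intro b hb
        rcases eq_or_lt_of_le (hlam b) with h0 | h0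
        · rw [← h0, zero_mul]
        · have hzb := h b hb h0
          have : 0 ≤ Dt b z := by have := Dt_antisymm z b; omega
          have : (0:ℝ) ≤ (Dt b z : ℝ) := by exact_mod_cast this
          nlinarith
      have hstrict : 0 < lam b1 * ((Dt b1 z : ℤ) : ℝ) := by
        have hb1' : 0 < Dt b1 z := by
          have hzb := h b1 hb1s hb1pos
          have := Dt_antisymm z b1
          omega
        have : (0:ℝ) < (Dt b1 z : ℝ) := by exact_mod_cast hb1'
        nlinarith
      have : 0 < ∑ b ∈ s, lam b * ((Dt b z : ℤ) : ℝ) := by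
        calc (0:ℝ) < lam b1 * ((Dt b1 z : ℤ) : ℝ)
              + ∑ b ∈ s.erase b1, lam b * ((Dt b z : ℤ) : ℝ) := by
              have : 0 ≤ ∑ b ∈ s.erase b1, lam b * ((Dt b z : ℤ) : ℝ) :=
                Finset.sum_nonneg (fun b hb => hterms b (Finset.mem_of_mem_erase hb))
              linarith
          _ = ∑ b ∈ s, lam b * ((Dt b z : ℤ) : ℝ) :=
              Finset.add_sum_erase s (fun b => lam b * ((Dt b z : ℤ) : ℝ)) hb1s
      linarith [key]
    obtain ⟨v0, hv0s, _, hv0z⟩ := hexv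
    obtain ⟨w0, hw0s, _, hw0z⟩ := hexw
    have hv0B := hsB v0 hv0s
    have hw0B := hsB w0 hw0s
    have huv0 := hu v0 hv0B
    have huw0 := hu w0 hw0B
    have hv0B' : v0 ∈ B' := hsB' hv0s
    have hw0B' : w0 ∈ B' := hsB' hw0s
    have hDv0w0 : 1 ≤ Dt v0 w0 := Dt_trans u v0 z w0 huv0 huz huw0 hv0z hw0z
    -- the filtered set of basis elements inside cone(v0, w0)
    set E : Finset V := B.filter (fun b => 0 ≤ Dt v0 b ∧ 0 ≤ Dt b w0) with hEdef
    have hEB : ∀ b ∈ E, b ∈ B := fun b hb => (Finset.mem_filter.1 hb).1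
    have hEmem : ∀ b ∈ E, 0 ≤ Dt v0 b ∧ 0 ≤ Dt b w0 :=
      fun b hb => (Finset.mem_filter.1 hb).2
    have hconeE : ∀ b ∈ E, ConeM B' (fun i => (b i : ℝ)) := fun b hb =>
      coneM_pair hv0B' hw0B' hDv0w0 (hEmem b hb).1 (hEmem b hb).2
    by_cases hpar : ∃ b ∈ E, Dt b z = 0
    · -- z parallel to a basis element of the cone
      obtain ⟨b0, hb0E, hb0z⟩ := hpar
      have hb0B := hEB b0 hb0E
      have hzb0 : Dt z b0 = 0 := by have := Dt_antisymm b0 z; omega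
      obtain ⟨t, ht⟩ := par_of_prim hzb0 (prim_of_mem hu hgen hmin hb0B)
      have htpos : 0 < t := by
        have := uR_of_par u ht
        by_contra hcon
        push_neg at hcon
        have : (t : ℝ) ≤ 0 := by exact_mod_cast hcon
        nlinarith [hu b0 hb0B]
      refine ⟨{b0}, fun x => if x = b0 then t.toNat else 0, ?_, ?_⟩
      · intro x hx
        simp only [Finset.coe_singleton, Set.mem_singleton_iff] at hx
        rw [hx]
        exact ⟨Finset.mem_coe.2 hb0B, hconeE b0 hb0E⟩
      · intro i
        rw [Finset.sum_singleton]
        show z i = ((if b0 = b0 then t.toNat else 0 : ℕ) : ℤ) * b0 i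
        rw [if_pos rfl, ht i]
        congr 1
        omega
    · -- split E by the side of z and take the extreme pair around z
      push_neg at hpar
      set E1 : Finset V := E.filter (fun b => 1 ≤ Dt b z) with hE1def
      set E2 : Finset V := E.filter (fun b => 1 ≤ Dt z b) with hE2def
      have hv0E : v0 ∈ E := by
        rw [hEdef, Finset.mem_filter]
        refine ⟨hv0B, ?_⟩
        show 0 ≤ Dt v0 v0 ∧ 0 ≤ Dt v0 w0
        rw [Dt_self]
        omega
      have hw0E : w0 ∈ E := by
        rw [hEdef, Finset.mem_filter]
        refine ⟨hw0B, ?_⟩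
        show 0 ≤ Dt v0 w0 ∧ 0 ≤ Dt w0 w0
        rw [Dt_self]
        omega
      have hv0E1 : v0 ∈ E1 := by
        rw [hE1def, Finset.mem_filter]
        refine ⟨hv0E, ?_⟩
        show 1 ≤ Dt v0 z
        omega
      have hw0E2 : w0 ∈ E2 := by
        rw [hE2def, Finset.mem_filter]
        refine ⟨hw0E, ?_⟩
        show 1 ≤ Dt z w0
        omega
      obtain ⟨e, heE1, hemax⟩ := Finset.exists_max_image E1
        (fun b => ((Dt v0 b : ℤ) : ℝ) / uR u b) ⟨v0, hv0E1⟩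
      obtain ⟨e', he'E2, he'min⟩ := Finset.exists_min_image E2
        (fun b => ((Dt v0 b : ℤ) : ℝ) / uR u b) ⟨w0, hw0E2⟩
      have heE : e ∈ E := (Finset.mem_filter.1 heE1).1
      have hez : 1 ≤ Dt e z := (Finset.mem_filter.1 heE1).2
      have he'E : e' ∈ E := (Finset.mem_filter.1 he'E2).1
      have hze' : 1 ≤ Dt z e' := (Finset.mem_filter.1 he'E2).2
      have heB := hEB e heE
      have he'B := hEB e' he'E
      have hue := hu e heB
      have hue' := hu e' he'B
      have hDee' : 1 ≤ Dt e e' := Dt_trans u e z e' hue huz hue' hez hze'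
      -- no basis element lies strictly between e and e'
      have hbetween : ∀ b ∈ B, ¬(1 ≤ Dt e b ∧ 1 ≤ Dt b e') := by
        rintro b hb ⟨h1, h2⟩
        have hub := hu b hb
        -- b is inside cone(v0, w0)
        have hv0b : 0 ≤ Dt v0 b := by
          have hplk := pluecker v0 e b e'
          have t1 : 0 ≤ Dt v0 e * Dt b e' := mul_nonneg (hEmem e heE).1 (by omega)
          have t2 : 0 ≤ Dt v0 e' * Dt e b := mul_nonneg (hEmem e' he'E).1 (by omega)
          nlinarith
        have hbw0 : 0 ≤ Dt b w0 := by
          have hplk := pluecker b e w0 e'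
          have hbe : Dt b e = - Dt e b := by have := Dt_antisymm b e; omega
          have hw0e' : Dt w0 e' = - Dt e' w0 := by have := Dt_antisymm w0 e'; omega
          rw [hbe, hw0e'] at hplk
          have t1 : 0 ≤ Dt e b * Dt e' w0 :=
            mul_nonneg (by omega) (by have := (hEmem e' he'E).2; omega)
          have t2 : 0 ≤ Dt b e' * Dt e w0 := mul_nonneg (by omega) (hEmem e heE).2
          nlinarith [hplk, t1, t2, hDee']
        have hbE : b ∈ E := by
          rw [hEdef, Finset.mem_filter]
          refine ⟨hb, ?_⟩
          show 0 ≤ Dt v0 b ∧ 0 ≤ Dt b w0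
          exact ⟨hv0b, hbw0⟩
        have hbz := hpar b hbE
        rcases lt_or_gt_of_ne hbz with hneg | hpos
        · -- b ∈ E2, contradicts minimality of e'
          have hbE2 : b ∈ E2 := by
            rw [hE2def, Finset.mem_filter]
            refine ⟨hbE, ?_⟩
            show 1 ≤ Dt z b
            have := Dt_antisymm z b
            omega
          have hf := he'min b hbE2
          rw [div_le_div_iff₀ (hu e' he'B) hub] at hf
          have hid := uR_identity u v0 b e'
          have hbe' : (1:ℝ) ≤ (Dt b e' : ℝ) := by exact_mod_cast h2
          nlinarith [hu v0 hv0B]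
        · -- b ∈ E1, contradicts maximality of e
          have hbE1 : b ∈ E1 := by
            rw [hE1def, Finset.mem_filter]
            refine ⟨hbE, ?_⟩
            show 1 ≤ Dt b z
            omega
          have hf := hemax b hbE1
          rw [div_le_div_iff₀ hub (hu e heB)] at hf
          have hid := uR_identity u v0 e b
          have heb : (1:ℝ) ≤ (Dt e b : ℝ) := by exact_mod_cast h1
          nlinarith [hu v0 hv0B]
      have hDt1 : Dt e e' = 1 := structure_thm hu hgen hmin heB he'B hDee' hbetween
      have hnee' : e ≠ e' := by
        intro h
        rw [h, Dt_self] at hDt1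
        omega
      refine ⟨{e, e'}, fun x => if x = e then (Dt z e').toNat
        else if x = e' then (Dt e z).toNat else 0, ?_, ?_⟩
      · intro x hx
        simp only [Finset.coe_insert, Finset.coe_singleton, Set.mem_insert_iff,
          Set.mem_singleton_iff] at hx
        rcases hx with h | h <;> rw [h]
        · exact ⟨Finset.mem_coe.2 heB, hconeE e heE⟩
        · exact ⟨Finset.mem_coe.2 he'B, hconeE e' he'E⟩
      · intro i
        rw [Finset.sum_pair hnee']
        show z i = ((if e = e then (Dt z e').toNat else if e = e' then (Dt e z).toNat else 0 : ℕ) : ℤ) * e i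
            + ((if e' = e then (Dt z e').toNat else if e' = e' then (Dt e z).toNat else 0 : ℕ) : ℤ) * e' i
        rw [if_pos rfl, if_neg (Ne.symm hnee'), if_pos rfl]
        have hcr := cramer e e' z i
        rw [hDt1, one_mul] at hcr
        have h1 : ((Dt z e').toNat : ℤ) = Dt z e' := by omega
        have h2 : ((Dt e z).toNat : ℤ) = Dt e z := by omega
        rw [h1, h2]
        linarith [hcr]

end SN


/-- Every two-dimensional Hilbert basis is supernormal.  `B` is a Hilbert basis:
it is pointed, generates the monoid `ℤ² ∩ cone(B)`, and no proper subset does. -/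
theorem stmt7 (B : Finset (Fin 2 → ℤ))
    (hpointed : ∃ u : Fin 2 → ℝ, ∀ b ∈ B, 0 < ∑ i, (b i : ℝ) * u i)
    (hgen : ∀ z : Fin 2 → ℤ, ConeM ↑B (fun i => (z i : ℝ)) → NNCombM ↑B z)
    (hmin : ∀ B' : Finset (Fin 2 → ℤ), B' ⊂ B →
      ¬ ∀ z : Fin 2 → ℤ, ConeM ↑B (fun i => (z i : ℝ)) → NNCombM ↑B' z) :
    SupernormalM (↑B : Set (Fin 2 → ℤ)) :=
  SN.stmt7' B hpointed hgen hmin
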